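/- Let d₁ ≥ 1, d₂ ≥ 2, and write Fourier variables (ξ, η') ∈ ℝ^{d₁} × ℝ^{d₂-1}. Set ω(ξ,η') = √(|ξ|² − |η'|²) on the region R₁ = {|η'| < |ξ|} and λ(ξ,η') = √(|η'|² − |ξ|²) on the region R₂ = {|ξ| < |η'|}. Let a, b : ℝ^{d₁} × ℝ^{d₂-1} → ℂ be measurable functions satisfying the constraint λ(ξ,η')·a(ξ,η') + b(ξ,η') = 0 for almost every (ξ,η') ∈ R₂. For y₁ ≥ 0 define A(y₁) = cos(ω y₁)·a + (sin(ω y₁)/ω)·b and B(y₁) = −ω·sin(ω y₁)·a + cos(ω y₁)·b on R₁, and A(y₁) = cosh(λ y₁)·a + (sinh(λ y₁)/λ)·b and B(y₁) = λ·sinh(λ y₁)·a + cosh(λ y₁)·b on R₂. Then for every y₁ ≥ 0, ∬_{R₁} ω²|A(y₁)|² dξdη' + ∬_{R₂} λ²|A(y₁)|² dξdη' + ∬_{R₁∪R₂} |B(y₁)|² dξdη' ≤ ∬_{R₁} ω²|a|² dξdη' + ∬_{R₂} λ²|a|² dξdη' + ∬_{R₁∪R₂} |b|² dξdη'. -/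

import Mathlib

open MeasureTheory

private lemma energy_identity (w c s : ℝ) (u v : ℂ) (hw : 0 < w) (hcs : c^2 + s^2 = 1) :
    w^2 * ‖(c:ℂ)*u + ((s/w : ℝ):ℂ)*v‖^2
      + ‖-((w*s : ℝ):ℂ)*u + ((c:ℝ):ℂ)*v‖^2
    = w^2 * ‖u‖^2 + ‖v‖^2 := by
  simp only [Complex.sq_norm, Complex.normSq_apply, Complex.add_re, Complex.add_im,
    Complex.mul_re, Complex.mul_im, Complex.neg_re, Complex.neg_im,
    Complex.ofReal_re, Complex.ofReal_im]
  field_simp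
  linear_combination (w^2*(u.re^2+u.im^2) + (v.re^2+v.im^2)) * hcs

private lemma A_decay (l y : ℝ) (u : ℂ) (hl : 0 < l) :
    (Real.cosh (l*y) : ℂ) * u + ((Real.sinh (l*y) / l : ℝ) : ℂ) * (-((l:ℂ) * u))
      = ((Real.exp (-(l*y)) : ℝ) : ℂ) * u := by
  have hl' : (l:ℂ) ≠ 0 := by exact_mod_cast hl.ne'
  push_cast
  field_simp
  linear_combination u * Complex.cosh_sub_sinh ((l:ℂ) * (y:ℂ))

private lemma B_decay (l y : ℝ) (u : ℂ) :
    ((l * Real.sinh (l*y) : ℝ) : ℂ) * u + (Real.cosh (l*y) : ℂ) * (-((l:ℂ) * u))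
      = ((Real.exp (-(l*y)) : ℝ) : ℂ) * (-((l:ℂ) * u)) := by
  push_cast
  linear_combination (-(l:ℂ) * u) * Complex.cosh_sub_sinh ((l:ℂ) * (y:ℂ))

private lemma decay_sq (l e x : ℝ) (he0 : 0 ≤ e) (he1 : e ≤ 1) :
    l^2 * (e * x)^2 ≤ l^2 * x^2 := by
  nlinarith [mul_nonneg (mul_nonneg (sub_nonneg.2 he1) (by linarith : (0:ℝ) ≤ 1 + e)) (sq_nonneg (l*x))]

theorem propagator_energy_bound_stable
    (d₁ d₂ : ℕ) (hd₁ : 1 ≤ d₁) (hd₂ : 2 ≤ d₂)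
    (a b : EuclideanSpace ℝ (Fin d₁) × EuclideanSpace ℝ (Fin (d₂ - 1)) → ℂ)
    (ha : Measurable a) (hb : Measurable b)
    (ω lam : EuclideanSpace ℝ (Fin d₁) × EuclideanSpace ℝ (Fin (d₂ - 1)) → ℝ)
    (hω : ∀ p, ω p = Real.sqrt (‖p.1‖ ^ 2 - ‖p.2‖ ^ 2))
    (hlam : ∀ p, lam p = Real.sqrt (‖p.2‖ ^ 2 - ‖p.1‖ ^ 2))
    (hconstraint : ∀ᵐ p ∂(volume.restrict
        {p : EuclideanSpace ℝ (Fin d₁) × EuclideanSpace ℝ (Fin (d₂ - 1)) | ‖p.1‖ < ‖p.2‖}),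
      (lam p : ℂ) * a p + b p = 0)
    (A B : ℝ → (EuclideanSpace ℝ (Fin d₁) × EuclideanSpace ℝ (Fin (d₂ - 1))) → ℂ)
    (hA₁ : ∀ y₁ p, ‖p.2‖ < ‖p.1‖ →
      A y₁ p = (Real.cos (ω p * y₁) : ℂ) * a p
        + ((Real.sin (ω p * y₁) / ω p : ℝ) : ℂ) * b p)
    (hB₁ : ∀ y₁ p, ‖p.2‖ < ‖p.1‖ →
      B y₁ p = -((ω p * Real.sin (ω p * y₁) : ℝ) : ℂ) * a p
        + ((Real.cos (ω p * y₁) : ℝ) : ℂ) * b p)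
    (hA₂ : ∀ y₁ p, ‖p.1‖ < ‖p.2‖ →
      A y₁ p = (Real.cosh (lam p * y₁) : ℂ) * a p
        + ((Real.sinh (lam p * y₁) / lam p : ℝ) : ℂ) * b p)
    (hB₂ : ∀ y₁ p, ‖p.1‖ < ‖p.2‖ →
      B y₁ p = ((lam p * Real.sinh (lam p * y₁) : ℝ) : ℂ) * a p
        + ((Real.cosh (lam p * y₁) : ℝ) : ℂ) * b p) :
    ∀ y₁ : ℝ, 0 ≤ y₁ →
      (∫⁻ p in {p : EuclideanSpace ℝ (Fin d₁) × EuclideanSpace ℝ (Fin (d₂ - 1)) |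
            ‖p.2‖ < ‖p.1‖},
          ENNReal.ofReal (ω p ^ 2 * ‖A y₁ p‖ ^ 2))
        + (∫⁻ p in {p : EuclideanSpace ℝ (Fin d₁) × EuclideanSpace ℝ (Fin (d₂ - 1)) |
            ‖p.1‖ < ‖p.2‖},
          ENNReal.ofReal (lam p ^ 2 * ‖A y₁ p‖ ^ 2))
        + (∫⁻ p in {p : EuclideanSpace ℝ (Fin d₁) × EuclideanSpace ℝ (Fin (d₂ - 1)) |
            ‖p.2‖ < ‖p.1‖} ∪ {p | ‖p.1‖ < ‖p.2‖},
          ENNReal.ofReal (‖B y₁ p‖ ^ 2))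
      ≤ (∫⁻ p in {p : EuclideanSpace ℝ (Fin d₁) × EuclideanSpace ℝ (Fin (d₂ - 1)) |
            ‖p.2‖ < ‖p.1‖},
          ENNReal.ofReal (ω p ^ 2 * ‖a p‖ ^ 2))
        + (∫⁻ p in {p : EuclideanSpace ℝ (Fin d₁) × EuclideanSpace ℝ (Fin (d₂ - 1)) |
            ‖p.1‖ < ‖p.2‖},
          ENNReal.ofReal (lam p ^ 2 * ‖a p‖ ^ 2))
        + (∫⁻ p in {p : EuclideanSpace ℝ (Fin d₁) × EuclideanSpace ℝ (Fin (d₂ - 1)) |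
            ‖p.2‖ < ‖p.1‖} ∪ {p | ‖p.1‖ < ‖p.2‖},
          ENNReal.ofReal (‖b p‖ ^ 2)) := by
  intro y₁ hy₁
  set S₁ : Set (EuclideanSpace ℝ (Fin d₁) × EuclideanSpace ℝ (Fin (d₂ - 1))) :=
    {p | ‖p.2‖ < ‖p.1‖} with hS₁def
  set S₂ : Set (EuclideanSpace ℝ (Fin d₁) × EuclideanSpace ℝ (Fin (d₂ - 1))) :=
    {p | ‖p.1‖ < ‖p.2‖} with hS₂def
  have hS₁ : MeasurableSet S₁ :=
    measurableSet_lt (measurable_snd.norm) (measurable_fst.norm)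
  have hS₂ : MeasurableSet S₂ :=
    measurableSet_lt (measurable_fst.norm) (measurable_snd.norm)
  have hdisj : Disjoint S₁ S₂ := by
    rw [Set.disjoint_left]
    intro p h1 h2
    simp only [hS₁def, hS₂def, Set.mem_setOf_eq] at h1 h2
    exact absurd (h1.trans h2) (lt_irrefl _)
  have hωm : Measurable ω := by
    have : ω = fun p => Real.sqrt (‖p.1‖ ^ 2 - ‖p.2‖ ^ 2) := funext hω
    rw [this]
    exact ((measurable_fst.norm.pow_const 2).sub
      (measurable_snd.norm.pow_const 2)).sqrt
  -- measurable surrogates on S₁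
  set g₁ : _ → ENNReal := fun p => ENNReal.ofReal (ω p ^ 2 *
      ‖(Real.cos (ω p * y₁) : ℂ) * a p
        + ((Real.sin (ω p * y₁) / ω p : ℝ) : ℂ) * b p‖ ^ 2) with hg₁def
  set h₁ : _ → ENNReal := fun p => ENNReal.ofReal (
      ‖-((ω p * Real.sin (ω p * y₁) : ℝ) : ℂ) * a p
        + ((Real.cos (ω p * y₁) : ℝ) : ℂ) * b p‖ ^ 2) with hh₁def
  have hωy : Measurable fun p => ω p * y₁ := hωm.mul_const y₁
  have hmeas_cos : Measurable fun p => ((Real.cos (ω p * y₁) : ℝ) : ℂ) :=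
    Complex.measurable_ofReal.comp hωy.cos
  have hmeas_sin : Measurable fun p => ((Real.sin (ω p * y₁) / ω p : ℝ) : ℂ) :=
    Complex.measurable_ofReal.comp (hωy.sin.div hωm)
  have hmeas_wsin : Measurable fun p => ((ω p * Real.sin (ω p * y₁) : ℝ) : ℂ) :=
    Complex.measurable_ofReal.comp (hωm.mul hωy.sin)
  have hAform : Measurable fun p => (Real.cos (ω p * y₁) : ℂ) * a p
      + ((Real.sin (ω p * y₁) / ω p : ℝ) : ℂ) * b p :=
    (hmeas_cos.mul ha).add (hmeas_sin.mul hb)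
  have hBform : Measurable fun p => -((ω p * Real.sin (ω p * y₁) : ℝ) : ℂ) * a p
      + ((Real.cos (ω p * y₁) : ℝ) : ℂ) * b p :=
    ((hmeas_wsin.neg).mul ha).add (hmeas_cos.mul hb)
  have habs : ∀ {f : EuclideanSpace ℝ (Fin d₁) × EuclideanSpace ℝ (Fin (d₂ - 1)) → ℂ}, Measurable f → Measurable fun p => ‖f p‖ :=
    fun hf => hf.norm
  have hg₁m : Measurable g₁ := by
    exact ENNReal.measurable_ofReal.comp
      ((hωm.pow_const 2).mul ((habs hAform).pow_const 2))
  have hh₁m : Measurable h₁ :=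
    ENNReal.measurable_ofReal.comp ((habs hBform).pow_const 2)
  have hga : Measurable fun p => ENNReal.ofReal (ω p ^ 2 * ‖a p‖ ^ 2) :=
    ENNReal.measurable_ofReal.comp
      ((hωm.pow_const 2).mul ((habs ha).pow_const 2))
  -- On S₁, ω p > 0
  have hωpos : ∀ p ∈ S₁, 0 < ω p := by
    intro p hp
    rw [hω]
    exact Real.sqrt_pos.2 (by
      have : ‖p.2‖ < ‖p.1‖ := hp
      nlinarith [norm_nonneg p.1, norm_nonneg p.2])
  -- replace A, B by formulas on S₁
  have hL1 : (∫⁻ p in S₁, ENNReal.ofReal (ω p ^ 2 * ‖A y₁ p‖ ^ 2)) =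
      ∫⁻ p in S₁, g₁ p := by
    refine setLIntegral_congr_fun hS₁ (fun p hp => ?_)
    rw [hA₁ y₁ p hp]
  have hL31 : (∫⁻ p in S₁, ENNReal.ofReal (‖B y₁ p‖ ^ 2)) =
      ∫⁻ p in S₁, h₁ p := by
    refine setLIntegral_congr_fun hS₁ (fun p hp => ?_)
    rw [hB₁ y₁ p hp]
  -- energy conservation on S₁
  have hS₁eq : (∫⁻ p in S₁, ENNReal.ofReal (ω p ^ 2 * ‖A y₁ p‖ ^ 2))
      + (∫⁻ p in S₁, ENNReal.ofReal (‖B y₁ p‖ ^ 2))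
      = (∫⁻ p in S₁, ENNReal.ofReal (ω p ^ 2 * ‖a p‖ ^ 2))
      + (∫⁻ p in S₁, ENNReal.ofReal (‖b p‖ ^ 2)) := by
    rw [hL1, hL31, ← lintegral_add_left hg₁m, ← lintegral_add_left hga]
    refine setLIntegral_congr_fun hS₁ (fun p hp => ?_)
    have hw := hωpos p hp
    rw [hg₁def, hh₁def]
    simp only
    rw [← ENNReal.ofReal_add (by positivity) (by positivity),
      ← ENNReal.ofReal_add (by positivity) (by positivity)]
    congr 1
    exact energy_identity (ω p) (Real.cos (ω p * y₁)) (Real.sin (ω p * y₁))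
      (a p) (b p) hw (by rw [add_comm]; exact Real.sin_sq_add_cos_sq _)
  -- decay on S₂
  have hmem₂ : ∀ᵐ p ∂(volume.restrict S₂), p ∈ S₂ := ae_restrict_mem hS₂
  have hkey₂ : ∀ᵐ p ∂(volume.restrict S₂),
      ENNReal.ofReal (lam p ^ 2 * ‖A y₁ p‖ ^ 2)
        ≤ ENNReal.ofReal (lam p ^ 2 * ‖a p‖ ^ 2) ∧
      ENNReal.ofReal (‖B y₁ p‖ ^ 2)
        ≤ ENNReal.ofReal (‖b p‖ ^ 2) := by
    filter_upwards [hconstraint, hmem₂] with p hc hp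
    have hl : 0 < lam p := by
      rw [hlam]
      exact Real.sqrt_pos.2 (by
        have : ‖p.1‖ < ‖p.2‖ := hp
        nlinarith [norm_nonneg p.1, norm_nonneg p.2])
    have hbp : b p = -((lam p : ℂ) * a p) := by linear_combination hc
    have hexp : Real.exp (-(lam p * y₁)) ≤ 1 := by
      rw [← Real.exp_zero]
      exact Real.exp_le_exp.2 (by nlinarith)
    have hexp0 : 0 < Real.exp (-(lam p * y₁)) := Real.exp_pos _
    have hAe : A y₁ p = ((Real.exp (-(lam p * y₁)) : ℝ) : ℂ) * a p := by
      rw [hA₂ y₁ p hp, hbp]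
      exact A_decay (lam p) y₁ (a p) hl
    have hBe : B y₁ p = ((Real.exp (-(lam p * y₁)) : ℝ) : ℂ) * b p := by
      rw [hB₂ y₁ p hp, hbp, B_decay (lam p) y₁ (a p), ← hbp]
    have habs_exp : ‖((Real.exp (-(lam p * y₁)) : ℝ) : ℂ)‖
        = Real.exp (-(lam p * y₁)) := by
      rw [Complex.norm_of_nonneg hexp0.le]
    constructor
    · apply ENNReal.ofReal_le_ofReal
      rw [hAe, norm_mul, habs_exp]
      exact decay_sq (lam p) _ (‖a p‖) hexp0.le hexp
    · apply ENNReal.ofReal_le_ofReal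
      rw [hBe, norm_mul, habs_exp]
      have := decay_sq 1 (Real.exp (-(lam p * y₁))) (‖b p‖) hexp0.le hexp
      simpa using this
  have hS₂A : (∫⁻ p in S₂, ENNReal.ofReal (lam p ^ 2 * ‖A y₁ p‖ ^ 2))
      ≤ ∫⁻ p in S₂, ENNReal.ofReal (lam p ^ 2 * ‖a p‖ ^ 2) :=
    lintegral_mono_ae (hkey₂.mono fun p hp => hp.1)
  have hS₂B : (∫⁻ p in S₂, ENNReal.ofReal (‖B y₁ p‖ ^ 2))
      ≤ ∫⁻ p in S₂, ENNReal.ofReal (‖b p‖ ^ 2) :=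
    lintegral_mono_ae (hkey₂.mono fun p hp => hp.2)
  rw [lintegral_union hS₂ hdisj, lintegral_union hS₂ hdisj]
  calc (∫⁻ p in S₁, ENNReal.ofReal (ω p ^ 2 * ‖A y₁ p‖ ^ 2))
        + (∫⁻ p in S₂, ENNReal.ofReal (lam p ^ 2 * ‖A y₁ p‖ ^ 2))
        + ((∫⁻ p in S₁, ENNReal.ofReal (‖B y₁ p‖ ^ 2))
          + (∫⁻ p in S₂, ENNReal.ofReal (‖B y₁ p‖ ^ 2)))
      = ((∫⁻ p in S₁, ENNReal.ofReal (ω p ^ 2 * ‖A y₁ p‖ ^ 2))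
          + (∫⁻ p in S₁, ENNReal.ofReal (‖B y₁ p‖ ^ 2)))
        + ((∫⁻ p in S₂, ENNReal.ofReal (lam p ^ 2 * ‖A y₁ p‖ ^ 2))
          + (∫⁻ p in S₂, ENNReal.ofReal (‖B y₁ p‖ ^ 2))) := by ring
    _ ≤ ((∫⁻ p in S₁, ENNReal.ofReal (ω p ^ 2 * ‖a p‖ ^ 2))
          + (∫⁻ p in S₁, ENNReal.ofReal (‖b p‖ ^ 2)))
        + ((∫⁻ p in S₂, ENNReal.ofReal (lam p ^ 2 * ‖a p‖ ^ 2))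
          + (∫⁻ p in S₂, ENNReal.ofReal (‖b p‖ ^ 2))) := by
        rw [hS₁eq]; gcongr
    _ = _ := by ring
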